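/- Let ([R̲,R̄], ℬ, μ) be a probability space over a closed interval of a rich single-crossing domain with its order-topology Borel σ-algebra. Let F = (t_F, q_F) be strategy-proof and individually rational with F(R̲) = (0,0). Then for every ε > 0 there exists a strategy-proof, individually rational mechanism G with finite range such that E[F] − E[G] < ε, where E[H] = ∫ t_H dμ denotes expected revenue. -/

import Mathlib

open Set MeasureTheory Filter Topology
open scoped ENNReal

noncomputable section

abbrev Bundle : Type := ℝ × ℝ

/-- The set of allocations Z = [0,∞) × [0,1]. -/
def Z : Set Bundle := {p | 0 ≤ p.1 ∧ p.2 ∈ Set.Icc (0:ℝ) 1}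

/-- A CM (continuous, monotone) preference on Z. -/
structure CMPref where
  R : Bundle → Bundle → Prop
  total : ∀ x ∈ Z, ∀ y ∈ Z, R x y ∨ R y x
  trans : ∀ x y z : Bundle, R x y → R y z → R x z
  moneyMono : ∀ t' t'' q : ℝ, (t', q) ∈ Z → (t'', q) ∈ Z → t' < t'' →
    R (t', q) (t'', q) ∧ ¬ R (t'', q) (t', q)
  qMono : ∀ t q' q'' : ℝ, (t, q') ∈ Z → (t, q'') ∈ Z → q' < q'' →
    R (t, q'') (t, q') ∧ ¬ R (t, q') (t, q'')
  contUC : ∀ z ∈ Z, IsClosed {x | x ∈ Z ∧ R x z}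
  contLC : ∀ z ∈ Z, IsClosed {x | x ∈ Z ∧ R z x}

/-- Indifference. -/
def CMPref.I (p : CMPref) (x y : Bundle) : Prop := p.R x y ∧ p.R y x

/-- Indifference class of x. -/
def IC (p : CMPref) (x : Bundle) : Set Bundle := {y | y ∈ Z ∧ p.I y x}

/-- Single-crossing property of two preferences. -/
def SingleCrossing (p p' : CMPref) : Prop :=
  ∀ x y z : Bundle, z ∈ IC p x ∩ IC p' y → IC p x ∩ IC p' y = {z}

/-- x ≤ y on bundles: equal, or strictly smaller in both coordinates. -/
def bleq (x y : Bundle) : Prop := x = y ∨ (x.1 < y.1 ∧ x.2 < y.2)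

/-- □(z) = bundles (in Z) below z. -/
def square (z : Bundle) : Set Bundle := {x | x ∈ Z ∧ bleq x z}

/-- Upper contour set within Z. -/
def UC (p : CMPref) (z : Bundle) : Set Bundle := {x | x ∈ Z ∧ p.R x z}

/-- p'' cuts p' from above at z. -/
def CutsAt (p' p'' : CMPref) (z : Bundle) : Prop :=
  square z ∩ UC p'' z ⊆ square z ∩ UC p' z

/-- p' ≺ p'' : p'' cuts p' from above at every bundle (and they are distinct). -/
def Prec (p' p'' : CMPref) : Prop := p' ≠ p'' ∧ ∀ z ∈ Z, CutsAt p' p'' z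

/-- p ≼ p'. -/
def PrecEq (p p' : CMPref) : Prop := Prec p p' ∨ p = p'

/-- Rich single-crossing domain. -/
def RichSC (D : Set CMPref) : Prop :=
  (∀ p ∈ D, ∀ p' ∈ D, p ≠ p' → SingleCrossing p p') ∧
  (∀ x ∈ Z, ∀ y ∈ Z, x.1 < y.1 → x.2 < y.2 → ∃ p ∈ D, p.I x y)

/-- Closed interval [a,b] within the domain D. -/
def OrdInterval (D : Set CMPref) (a b : CMPref) : Set CMPref :=
  {p | p ∈ D ∧ PrecEq a p ∧ PrecEq p b}

/-- Strategy-proofness on a set of preferences. -/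
def StrategyProofOn (S : Set CMPref) (F : CMPref → Bundle) : Prop :=
  ∀ p ∈ S, ∀ p' ∈ S, p.R (F p) (F p')

/-- Individual rationality on a set of preferences. -/
def IROn (S : Set CMPref) (F : CMPref → Bundle) : Prop :=
  ∀ p ∈ S, p.R (F p) ((0:ℝ), (0:ℝ))

/-! ### Auxiliary lemmas -/

lemma CMPref.refl' (p : CMPref) {z : Bundle} (hz : z ∈ Z) : p.R z z := by
  rcases p.total z hz z hz with h | h <;> exact h

/-- A cheaper bundle with weakly more quantity is strictly preferred by every CM preference. -/
lemma cheap_strict (p : CMPref) {z w : Bundle} (hz : z ∈ Z) (hw : w ∈ Z)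
    (h1 : w.1 < z.1) (h2 : z.2 ≤ w.2) : p.R w z ∧ ¬ p.R z w := by
  have hmZ : ((w.1, z.2) : Bundle) ∈ Z := ⟨hw.1, hz.2⟩
  have h3 := p.moneyMono w.1 z.1 z.2 hmZ hz h1
  rcases h2.eq_or_lt with h2' | h2'
  · have hmw : ((w.1, z.2) : Bundle) = w := by
      rw [h2']
    rw [hmw] at h3
    exact ⟨h3.1, h3.2⟩
  · have h4 := p.qMono w.1 z.2 w.2 hmZ hw h2'
    refine ⟨p.trans _ _ _ h4.1 h3.1, fun h => h3.2 (p.trans _ _ _ h h4.1)⟩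

lemma exists_pref_max (p : CMPref) {S : Set Bundle} (hS : S.Finite) :
    S.Nonempty → S ⊆ Z → ∃ m ∈ S, ∀ w ∈ S, p.R m w := by
  refine Set.Finite.induction_on
    (motive := fun S _ => S.Nonempty → S ⊆ Z → ∃ m ∈ S, ∀ w ∈ S, p.R m w) S hS ?_ ?_
  · rintro ⟨x, hx⟩ _; exact absurd hx (Set.notMem_empty x)
  · intro a s ha hsfin IH hne hsub
    have haZ : a ∈ Z := hsub (Set.mem_insert _ _)
    rcases s.eq_empty_or_nonempty with rfl | hsne
    · refine ⟨a, Set.mem_insert _ _, ?_⟩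
      intro w hw
      rcases Set.mem_insert_iff.mp hw with rfl | hw
      · exact p.refl' haZ
      · exact absurd hw (Set.notMem_empty w)
    · obtain ⟨m, hm, hmax⟩ := IH hsne (fun x hx => hsub (Set.mem_insert_of_mem _ hx))
      have hmZ : m ∈ Z := hsub (Set.mem_insert_of_mem _ hm)
      rcases p.total a haZ m hmZ with hcase | hcase
      · refine ⟨a, Set.mem_insert _ _, ?_⟩
        intro w hw
        rcases Set.mem_insert_iff.mp hw with rfl | hw
        · exact p.refl' haZ
        · exact p.trans _ _ _ hcase (hmax w hw)
      · refine ⟨m, Set.mem_insert_of_mem _ hm, ?_⟩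
        intro w hw
        rcases Set.mem_insert_iff.mp hw with rfl | hw
        · exact hcase
        · exact hmax w hw

lemma exists_best (p : CMPref) {S : Set Bundle} (hS : S.Finite) (hne : S.Nonempty)
    (hsub : S ⊆ Z) :
    ∃ m ∈ S, (∀ w ∈ S, p.R m w) ∧ ∀ m' ∈ S, (∀ w ∈ S, p.R m' w) → m'.1 ≤ m.1 := by
  classical
  set M' : Set Bundle := {m | m ∈ S ∧ ∀ w ∈ S, p.R m w} with hM'
  obtain ⟨m0, hm0S, hm0⟩ := exists_pref_max p hS hne hsub
  have hM'ne : M'.Nonempty := ⟨m0, hm0S, hm0⟩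
  have hM'fin : M'.Finite := hS.subset (fun x hx => hx.1)
  obtain ⟨m, hm, hmax⟩ := Set.Finite.exists_maximalFor Prod.fst M' hM'fin hM'ne
  refine ⟨m, hm.1, hm.2, ?_⟩
  intro m' hm'S hm'max
  by_contra hlt
  push_neg at hlt
  have := hmax ⟨hm'S, hm'max⟩ hlt.le
  exact absurd hlt (not_lt.mpr this)

lemma monotone_measurable' {Y : Type*} [CompleteLinearOrder Y] [TopologicalSpace Y]
    [OrderTopology Y] [MeasurableSpace Y] [BorelSpace Y] {f : Y → ℝ}
    (hf : Monotone f) : Measurable f := by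
  apply measurable_of_Iio
  intro a
  set L := f ⁻¹' Set.Iio a with hLdef
  have hlower : ∀ {u v : Y}, v ∈ L → u ≤ v → u ∈ L := by
    intro u v hv huv
    exact lt_of_le_of_lt (hf huv) hv
  by_cases hb : sSup L ∈ L
  · have : L = Set.Iic (sSup L) :=
      subset_antisymm (fun x hx => le_sSup hx) (fun x hx => hlower hb hx)
    rw [this]; exact measurableSet_Iic
  · have : L = Set.Iio (sSup L) := by
      ext x
      constructor
      · intro hx
        exact lt_of_le_of_ne (le_sSup hx) (fun h => hb (h ▸ hx))
      · intro hx
        obtain ⟨y, hy, hxy⟩ := lt_sSup_iff.mp hx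
        exact hlower hy hxy.le
    rw [this]; exact measurableSet_Iio

lemma small_tail {Y : Type*} [CompleteLinearOrder Y] [DenselyOrdered Y] [TopologicalSpace Y]
    [OrderTopology Y] [TopologicalSpace.MetrizableSpace Y] [MeasurableSpace Y] [BorelSpace Y]
    (μ : Measure Y) [IsFiniteMeasure μ] {a : Y} (ha : a < ⊤) {η : ℝ≥0∞} (hη : 0 < η) :
    ∃ y, a < y ∧ μ (Set.Ioc a y) < η := by
  obtain ⟨u, hanti, hmem, hlim⟩ := exists_seq_strictAnti_tendsto' ha
  have hiInter : ⋂ m, Set.Ioc a (u m) = ∅ := by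
    ext x
    simp only [Set.mem_iInter, Set.mem_Ioc, Set.mem_empty_iff_false, iff_false, not_forall]
    by_contra h
    push_neg at h
    have hax : a < x := (h 0).1
    obtain ⟨m, hm⟩ := (hlim.eventually_lt_const hax).exists
    exact absurd (h m).2 (not_le.mpr hm)
  have htend : Tendsto (fun m => μ (Set.Ioc a (u m))) atTop (𝓝 0) := by
    have h1 := tendsto_measure_iInter_atTop (μ := μ) (s := fun m => Set.Ioc a (u m))
      (fun m => measurableSet_Ioc.nullMeasurableSet)
      (fun i j hij => Set.Ioc_subset_Ioc_right (hanti.antitone hij))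
      ⟨0, measure_ne_top μ _⟩
    rwa [hiInter, measure_empty] at h1
  obtain ⟨m, hm⟩ := (htend.eventually_lt_const hη).exists
  exact ⟨u m, (hmem m).1, hm⟩

theorem stmt13 {X : Type*} [CompleteLinearOrder X] [DenselyOrdered X]
    [TopologicalSpace X] [OrderTopology X] [TopologicalSpace.MetrizableSpace X]
    [MeasurableSpace X] [BorelSpace X] (μ : Measure X) [IsProbabilityMeasure μ]
    (hnt : ∀ A : Set X, A.OrdConnected → (∃ x ∈ A, ∃ y ∈ A, x ≠ y) → 0 < μ A)
    (hcont : ∀ A : Set X, MeasurableSet A → ∀ c : ℝ≥0∞, 0 < c → c < μ A →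
      ∃ B ⊆ A, MeasurableSet B ∧ μ B = c)
    (D : Set CMPref) (hD : RichSC D) (e : X → CMPref) (he : ∀ x, e x ∈ D)
    (hord : ∀ x y : X, x < y ↔ Prec (e x) (e y))
    (F : X → Bundle) (hFZ : ∀ x, F x ∈ Z)
    (hSP : ∀ x y : X, (e x).R (F x) (F y))
    (hIR : ∀ x, (e x).R (F x) ((0:ℝ), (0:ℝ)))
    (hF0 : F ⊥ = ((0:ℝ), (0:ℝ))) :
    ∀ ε : ℝ, 0 < ε → ∃ G : X → Bundle,
      (Set.range G).Finite ∧ (∀ x, G x ∈ Z) ∧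
      (∀ x y : X, (e x).R (G x) (G y)) ∧
      (∀ x, (e x).R (G x) ((0:ℝ), (0:ℝ))) ∧
      (∫ x, (F x).1 ∂μ) - (∫ x, (G x).1 ∂μ) < ε := by
  classical
  intro ε hε
  -- Key single-crossing lemma
  have hKEY : ∀ a x : X, a ≤ x → ∀ z w : Bundle, z ∈ Z → w ∈ Z →
      (e a).R z w → (e x).R w z → ¬ (e x).R z w → z.1 ≤ w.1 := by
    intro a x hax z w hz hw hRa hRwz hnRzw
    by_contra hle
    push_neg at hle
    have hq : w.2 < z.2 := by
      by_contra hq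
      push_neg at hq
      exact (cheap_strict (e a) hz hw hle hq).2 hRa
    have hax' : a < x := by
      rcases hax.lt_or_eq with h | rfl
      · exact h
      · exact absurd hRa hnRzw
    set u : ℝ := z.1 - w.1 with hu
    have hupos : 0 < u := sub_pos.mpr hle
    set φ : ℝ → Bundle := fun δ => (w.1 + δ, w.2) with hφ
    have hφZ : ∀ δ ∈ Set.Icc (0:ℝ) u, φ δ ∈ Z := by
      intro δ hδ
      exact ⟨add_nonneg hw.1 hδ.1, hw.2⟩
    have hφcont : Continuous φ := (continuous_const.add continuous_id).prodMk continuous_const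
    set U : Set ℝ := φ ⁻¹' {b | b ∈ Z ∧ (e x).R b z} with hUdef
    set V : Set ℝ := φ ⁻¹' {b | b ∈ Z ∧ (e x).R z b} with hVdef
    have hUc : IsClosed U := ((e x).contUC z hz).preimage hφcont
    have hVc : IsClosed V := ((e x).contLC z hz).preimage hφcont
    have hcover : Set.Icc (0:ℝ) u ⊆ U ∪ V := by
      intro δ hδ
      rcases (e x).total (φ δ) (hφZ δ hδ) z hz with h | h
      · exact Or.inl ⟨hφZ δ hδ, h⟩
      · exact Or.inr ⟨hφZ δ hδ, h⟩
    have h00 : φ 0 = w := by simp [hφ]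
    have hq2 := (e x).qMono z.1 w.2 z.2 ⟨hz.1, hw.2⟩ hz hq
    have hphiu : φ u = (z.1, w.2) := by
      simp only [hφ, hu]
      congr 1
      ring
    have h0U : (0:ℝ) ∈ Set.Icc (0:ℝ) u ∩ U := by
      refine ⟨⟨le_refl 0, hupos.le⟩, ?_⟩
      show φ 0 ∈ {b | b ∈ Z ∧ (e x).R b z}
      rw [h00]; exact ⟨hw, hRwz⟩
    have huV : u ∈ Set.Icc (0:ℝ) u ∩ V := by
      refine ⟨⟨hupos.le, le_refl u⟩, ?_⟩
      show φ u ∈ {b | b ∈ Z ∧ (e x).R z b}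
      rw [hphiu]
      exact ⟨⟨hz.1, hw.2⟩, hq2.1⟩
    obtain ⟨δ, hδIcc, hδU, hδV⟩ :
        ∃ δ, δ ∈ Set.Icc (0:ℝ) u ∧ δ ∈ U ∧ δ ∈ V := by
      have h := (isPreconnected_closed_iff.mp isPreconnected_Icc) U V hUc hVc hcover
        ⟨0, h0U⟩ ⟨u, huV⟩
      obtain ⟨δ, hδ1, hδ2, hδ3⟩ := h
      exact ⟨δ, hδ1, hδ2, hδ3⟩
    have hδ0 : 0 < δ := by
      rcases hδIcc.1.lt_or_eq with h | h
      · exact h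
      · exfalso
        rw [← h] at hδV
        have : (e x).R z (φ 0) := hδV.2
        rw [h00] at this
        exact hnRzw this
    have hδu : δ < u := by
      rcases hδIcc.2.lt_or_eq with h | h
      · exact h
      · exfalso
        rw [h] at hδU
        have : (e x).R (φ u) z := hδU.2
        rw [hphiu] at this
        exact hq2.2 this
    have hsq : φ δ ∈ square z := by
      refine ⟨hδU.1, Or.inr ⟨?_, hq⟩⟩
      show w.1 + δ < z.1
      have : u = z.1 - w.1 := hu
      linarith
    have hcut := ((hord a x).mp hax').2 z hz (Set.mem_inter hsq ⟨hδU.1, hδU.2⟩)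
    have h1 : (e a).R (φ δ) w := (e a).trans _ _ _ hcut.2.2 hRa
    have h2 := (e a).moneyMono w.1 (w.1 + δ) w.2 hw (hφZ δ hδIcc) (by linarith)
    exact h2.2 h1
  -- Monotonicity of payments for any strategy-proof mechanism
  have hMONO : ∀ H : X → Bundle, (∀ x, H x ∈ Z) → (∀ x y, (e x).R (H x) (H y)) →
      Monotone fun x => (H x).1 := by
    intro H hHZ hHSP x y hxy
    rcases hxy.lt_or_eq with hl | rfl
    · by_cases hyx' : (e y).R (H x) (H y)
      · by_contra hlt
        push_neg at hlt
        have hq : (H y).2 < (H x).2 := by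
          by_contra hq
          push_neg at hq
          exact (cheap_strict (e x) (hHZ x) (hHZ y) hlt hq).2 (hHSP x y)
        have hwsq : H y ∈ square (H x) := ⟨hHZ y, Or.inr ⟨hlt, hq⟩⟩
        have hPrec := (hord x y).mp hl
        have hcut := hPrec.2 (H x) (hHZ x) (Set.mem_inter hwsq ⟨hHZ y, hHSP y x⟩)
        have hxw : (e x).R (H y) (H x) := hcut.2.2
        have hsc := hD.1 (e x) (he x) (e y) (he y) hPrec.1
        have hzmem : H x ∈ IC (e x) (H x) ∩ IC (e y) (H x) :=
          ⟨⟨hHZ x, (e x).refl' (hHZ x), (e x).refl' (hHZ x)⟩,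
           ⟨hHZ x, (e y).refl' (hHZ x), (e y).refl' (hHZ x)⟩⟩
        have heq := hsc (H x) (H x) (H x) hzmem
        have hwmem : H y ∈ IC (e x) (H x) ∩ IC (e y) (H x) :=
          ⟨⟨hHZ y, hxw, hHSP x y⟩, ⟨hHZ y, hHSP y x, hyx'⟩⟩
        rw [heq] at hwmem
        have : H y = H x := hwmem
        rw [this] at hlt
        exact lt_irrefl _ hlt
      · exact hKEY x y hl.le (H x) (H y) (hHZ x) (hHZ y) (hHSP x y) (hHSP y x) hyx'
    · exact le_refl _
  set t : X → ℝ := fun x => (F x).1 with htdef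
  have htmono : Monotone t := hMONO F hFZ hSP
  set T : ℝ := t ⊤ with hTdef
  have ht0 : ∀ x, 0 ≤ t x := fun x => (hFZ x).1
  have htT : ∀ x, t x ≤ T := fun x => htmono le_top
  have hT0 : 0 ≤ T := ht0 ⊤
  obtain ⟨n0, hn0⟩ := exists_nat_gt (2 * T / ε)
  obtain ⟨n, hn1, hn2⟩ : ∃ n : ℕ, 1 ≤ n ∧ 2 * T / ε < (n:ℝ) :=
    ⟨n0 + 1, Nat.le_add_left 1 n0, lt_of_lt_of_le hn0 (by exact_mod_cast Nat.le_succ n0)⟩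
  have hnpos : (0:ℝ) < (n:ℝ) := by
    have : (1:ℝ) ≤ (n:ℝ) := by exact_mod_cast hn1
    linarith
  have h2T : 2 * T < (n:ℝ) * ε := by
    calc 2 * T = (2 * T / ε) * ε := by field_simp
    _ < (n:ℝ) * ε := by exact mul_lt_mul_of_pos_right hn2 hε
  have hTn : T / (n:ℝ) < ε / 2 := by
    rw [div_lt_div_iff₀ hnpos (by norm_num : (0:ℝ) < 2)]
    linarith
  set η' : ℝ := ε / (2 * (n:ℝ) * (T + 1)) with hη'def
  have hη'pos : 0 < η' := by positivity
  -- choice of menu points with small bad sets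
  have hchoice : ∀ k : ℕ, ∃ (p : X) (bd : Set X), MeasurableSet bd ∧
      μ bd ≤ ENNReal.ofReal η' ∧
      ∀ x : X, ((k:ℝ)+1) * T / (n:ℝ) ≤ t x → x ∉ bd →
        p ≤ x ∧ ((k:ℝ)+1) * T / (n:ℝ) ≤ t p := by
    intro k
    set c : ℝ := ((k:ℝ)+1) * T / (n:ℝ) with hcdef
    by_cases hS : {x : X | c ≤ t x}.Nonempty
    · set a := sInf {x : X | c ≤ t x} with hadef
      by_cases hA : c ≤ t a
      · refine ⟨a, ∅, MeasurableSet.empty, by simp, ?_⟩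
        intro x hx _
        exact ⟨sInf_le hx, hA⟩
      · push_neg at hA
        have hupper : ∀ x : X, a < x → c ≤ t x := by
          intro x hax
          obtain ⟨s, hs, hsx⟩ := sInf_lt_iff.mp hax
          exact le_trans hs (htmono hsx.le)
        have haT : a < ⊤ := by
          obtain ⟨s, hs⟩ := hS
          have h1 : a ≤ s := sInf_le hs
          rcases h1.lt_or_eq with h | h
          · exact lt_of_lt_of_le h le_top
          · exact absurd hs (not_le.mpr (h ▸ hA))
        obtain ⟨y, hay, hμy⟩ := small_tail μ haT
          (show (0:ℝ≥0∞) < ENNReal.ofReal η' from ENNReal.ofReal_pos.mpr hη'pos)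
        refine ⟨y, Set.Ioc a y, measurableSet_Ioc, hμy.le, ?_⟩
        intro x hx hxbd
        have hax : a < x := by
          have h1 : a ≤ x := sInf_le hx
          rcases h1.lt_or_eq with h | h
          · exact h
          · exact absurd hx (not_le.mpr (h ▸ hA))
        have hyx : y < x := by
          by_contra h
          push_neg at h
          exact hxbd ⟨hax, h⟩
        exact ⟨hyx.le, hupper y hay⟩
    · refine ⟨⊥, ∅, MeasurableSet.empty, by simp, ?_⟩
      intro x hx _
      exact absurd ⟨x, hx⟩ hS
  choose pt bad hbdmeas hbdμ hbdprop using hchoice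
  -- the menu
  set P : Set X := insert ⊥ (pt '' Set.Iio n) with hPdef
  have hPfin : P.Finite := ((Set.finite_Iio n).image pt).insert ⊥
  set M : Set Bundle := F '' P with hMdef
  have hMfin : M.Finite := hPfin.image F
  have hMne : M.Nonempty := ⟨F ⊥, ⟨⊥, Set.mem_insert _ _, rfl⟩⟩
  have hMsub : M ⊆ Z := by
    rintro w ⟨p, _, rfl⟩
    exact hFZ p
  have h00M : ((0:ℝ),(0:ℝ)) ∈ M := ⟨⊥, Set.mem_insert _ _, hF0⟩
  have hGex : ∀ x : X, ∃ g, g ∈ M ∧ (∀ w ∈ M, (e x).R g w) ∧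
      ∀ g' ∈ M, (∀ w ∈ M, (e x).R g' w) → g'.1 ≤ g.1 := by
    intro x
    obtain ⟨m, hm, h1, h2⟩ := exists_best (e x) hMfin hMne hMsub
    exact ⟨m, hm, h1, h2⟩
  choose G hGM hGmax hGtie using hGex
  have hGZ : ∀ x, G x ∈ Z := fun x => hMsub (hGM x)
  have hGSP : ∀ x y : X, (e x).R (G x) (G y) := fun x y => hGmax x (G y) (hGM y)
  -- payment guarantee from menu points below x
  have hpay : ∀ (x : X) (p : X), p ∈ P → p ≤ x → (F p).1 ≤ (G x).1 := by
    intro x p hpP hpx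
    have hFpM : F p ∈ M := ⟨p, hpP, rfl⟩
    by_cases hc : (e x).R (F p) (G x)
    · exact hGtie x (F p) hFpM (fun w hw => (e x).trans _ _ _ hc (hGmax x w hw))
    · obtain ⟨p', _, hGx⟩ := hGM x
      refine hKEY p x hpx (F p) (G x) (hFZ p) (hGZ x) ?_ (hGmax x _ hFpM) hc
      rw [← hGx]
      exact hSP p p'
  have hGmono : Monotone fun x => (G x).1 := hMONO G hGZ hGSP
  -- bad set
  set B : Set X := ⋃ k ∈ Finset.range n, bad k with hBdef
  have hBmeas : MeasurableSet B := Finset.measurableSet_biUnion _ (fun k _ => hbdmeas k)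
  have hμB : μ B ≤ ENNReal.ofReal ((n:ℝ) * η') := by
    calc μ B ≤ ∑ k ∈ Finset.range n, μ (bad k) := measure_biUnion_finset_le _ _
      _ ≤ ∑ _k ∈ Finset.range n, ENNReal.ofReal η' := Finset.sum_le_sum fun k _ => hbdμ k
      _ = (n:ℝ≥0∞) * ENNReal.ofReal η' := by
          rw [Finset.sum_const, Finset.card_range, nsmul_eq_mul]
      _ = ENNReal.ofReal ((n:ℝ) * η') := by
          rw [ENNReal.ofReal_mul (by positivity : (0:ℝ) ≤ (n:ℝ)), ENNReal.ofReal_natCast]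
  have hμBreal : (μ B).toReal ≤ (n:ℝ) * η' :=
    ENNReal.toReal_le_of_le_ofReal (by positivity) hμB
  -- pointwise bound off the bad set
  have hptw : ∀ x : X, x ∉ B → t x ≤ (G x).1 + T / (n:ℝ) := by
    intro x hxB
    set Q : ℕ → Prop := fun j => (j:ℝ) * T / (n:ℝ) ≤ t x with hQdef
    have hQ0 : Q 0 := by
      show ((0:ℕ):ℝ) * T / (n:ℝ) ≤ t x
      simpa using ht0 x
    set K : ℕ := Nat.findGreatest Q n with hKdef
    have hQK : Q K := Nat.findGreatest_spec (Nat.zero_le n) hQ0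
    have hKn : K ≤ n := Nat.findGreatest_le n
    have hup : t x ≤ ((K:ℝ)+1) * T / (n:ℝ) := by
      rcases eq_or_lt_of_le hKn with h | h
      · have h1 : t x ≤ T := htT x
        have h2 : ((K:ℝ)+1) * T / (n:ℝ) = T + T / (n:ℝ) := by
          rw [h]
          field_simp
        rw [h2]
        have h3 : 0 ≤ T / (n:ℝ) := div_nonneg hT0 hnpos.le
        linarith
      · have hnQ : ¬ Q (K+1) := Nat.findGreatest_is_greatest (Nat.lt_succ_self K) h
        have : ¬ (((K+1:ℕ):ℝ) * T / (n:ℝ) ≤ t x) := hnQ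
        push_neg at this
        push_cast at this
        linarith
    by_cases hK0 : K = 0
    · rw [hK0] at hup
      simp only [Nat.cast_zero, zero_add, one_mul] at hup
      have hG0 : 0 ≤ (G x).1 := (hGZ x).1
      linarith
    · obtain ⟨k, hk⟩ : ∃ k, K = k + 1 :=
        ⟨K - 1, (Nat.succ_pred_eq_of_pos (Nat.pos_of_ne_zero hK0)).symm⟩
      have hkn : k < n := lt_of_lt_of_le (by omega) hKn
      have hxbad : x ∉ bad k := fun hx => hxB (Set.mem_biUnion (Finset.mem_range.mpr hkn) hx)
      have hcx : ((k:ℝ)+1) * T / (n:ℝ) ≤ t x := by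
        have h1 : ((K:ℕ):ℝ) * T / (n:ℝ) ≤ t x := hQK
        rw [hk] at h1
        push_cast at h1
        linarith
      obtain ⟨hple, hcp⟩ := hbdprop k x hcx hxbad
      have hptP : pt k ∈ P := Set.mem_insert_of_mem _ ⟨k, Set.mem_Iio.mpr hkn, rfl⟩
      have h1 : ((k:ℝ)+1) * T / (n:ℝ) ≤ (G x).1 := le_trans hcp (hpay x (pt k) hptP hple)
      rw [hk] at hup
      push_cast at hup
      have h2 : ((k:ℝ)+1+1) * T / (n:ℝ) = ((k:ℝ)+1) * T / (n:ℝ) + T / (n:ℝ) := by ring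
      linarith
  -- integrability
  have htmeas : Measurable t := monotone_measurable' htmono
  have htGmeas : Measurable (fun x => (G x).1) := monotone_measurable' hGmono
  have htint : Integrable t μ := by
    refine (integrable_const T).mono' htmeas.aestronglyMeasurable ?_
    filter_upwards with x
    rw [Real.norm_eq_abs, abs_of_nonneg (ht0 x)]
    exact htT x
  have htGint : Integrable (fun x => (G x).1) μ := by
    refine (integrable_const ((G ⊤).1)).mono' htGmeas.aestronglyMeasurable ?_
    filter_upwards with x
    rw [Real.norm_eq_abs, abs_of_nonneg (hGZ x).1]
    exact hGmono le_top
  have hind_int : Integrable (B.indicator fun _ => (1:ℝ)) μ := by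
    rw [integrable_indicator_iff hBmeas]
    exact integrableOn_const (measure_ne_top μ B)
  refine ⟨G, hMfin.subset (Set.range_subset_iff.mpr hGM), hGZ, hGSP,
    fun x => hGmax x _ h00M, ?_⟩
  have hsub_int : (∫ x, t x ∂μ) - (∫ x, (G x).1 ∂μ) = ∫ x, (t x - (G x).1) ∂μ :=
    (integral_sub htint htGint).symm
  have hle : (∫ x, (t x - (G x).1) ∂μ) ≤
      ∫ x, (T / (n:ℝ) + T * B.indicator (fun _ => (1:ℝ)) x) ∂μ := by
    refine integral_mono (htint.sub htGint)
      ((integrable_const (T / (n:ℝ))).add (hind_int.const_mul T)) ?_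
    intro x
    by_cases hx : x ∈ B
    · simp only [Set.indicator_of_mem hx, mul_one]
      have h1 := htT x
      have h2 : 0 ≤ (G x).1 := (hGZ x).1
      have h3 : 0 ≤ T / (n:ℝ) := div_nonneg hT0 hnpos.le
      linarith
    · simp only [Set.indicator_of_notMem hx, mul_zero, add_zero]
      have := hptw x hx
      linarith
  have hrhs : (∫ x, (T / (n:ℝ) + T * B.indicator (fun _ => (1:ℝ)) x) ∂μ) =
      T / (n:ℝ) + T * (μ B).toReal := by
    rw [integral_add (integrable_const _) (hind_int.const_mul T), integral_const,
      integral_const_mul, integral_indicator hBmeas, setIntegral_const]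
    simp [measure_univ, measureReal_def]
  have hfinal : T / (n:ℝ) + T * (μ B).toReal < ε := by
    have h1 : T * (μ B).toReal ≤ T * ((n:ℝ) * η') := mul_le_mul_of_nonneg_left hμBreal hT0
    have h2 : (n:ℝ) * η' = ε / (2 * (T + 1)) := by
      rw [hη'def]
      field_simp
    have h3 : T * (ε / (2 * (T + 1))) ≤ ε / 2 := by
      rw [← mul_div_assoc, div_le_div_iff₀ (by positivity) (by norm_num : (0:ℝ) < 2)]
      nlinarith
    rw [h2] at h1
    linarith
  show (∫ x, t x ∂μ) - (∫ x, (G x).1 ∂μ) < ε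
  rw [hsub_int]
  calc (∫ x, (t x - (G x).1) ∂μ)
      ≤ ∫ x, (T / (n:ℝ) + T * B.indicator (fun _ => (1:ℝ)) x) ∂μ := hle
    _ = T / (n:ℝ) + T * (μ B).toReal := hrhs
    _ < ε := hfinal
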